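/- For the system H₁ = p_x p_y + γ₁xy + γ₂/√(xy³) + γ₃/y², the quartic function K₄ = -4(xp_x - yp_y)²(p_x² + γ₁y²) - 4γ₂²/(xy) + 8p_x(xp_x - yp_y)γ₂/√(xy) + 16x(p_x² + γ₁y²)γ₃/y satisfies {H₁, K₄} = 0 on the domain x > 0, y > 0. -/

import Mathlib

set_option maxHeartbeats 2000000

noncomputable def pb (F G : ℝ → ℝ → ℝ → ℝ → ℝ) (x y px py : ℝ) : ℝ :=
  deriv (fun t => F x y t py) px * deriv (fun t => G t y px py) x
  - deriv (fun t => F t y px py) x * deriv (fun t => G x y t py) px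
  + deriv (fun t => F x y px t) py * deriv (fun t => G x t px py) y
  - deriv (fun t => F x t px py) y * deriv (fun t => G x y px t) py

noncomputable def H₁new (γ₁ γ₂ γ₃ : ℝ) : ℝ → ℝ → ℝ → ℝ → ℝ :=
  fun x y px py => px*py + γ₁*x*y + γ₂ / Real.sqrt (x*y^3) + γ₃ / y^2

noncomputable def K₄new (γ₁ γ₂ γ₃ : ℝ) : ℝ → ℝ → ℝ → ℝ → ℝ :=
  fun x y px py =>
    -4*(x*px - y*py)^2*(px^2 + γ₁*y^2) - 4*γ₂^2/(x*y)
    + 8*px*(x*px - y*py)*γ₂ / Real.sqrt (x*y)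
    + 16*x*(px^2 + γ₁*y^2)*γ₃ / y

theorem stmt10 (γ₁ γ₂ γ₃ : ℝ) (x y px py : ℝ) (hx : 0 < x) (hy : 0 < y) :
    pb (H₁new γ₁ γ₂ γ₃) (K₄new γ₁ γ₂ γ₃) x y px py = 0 := by
  have hxy : (0:ℝ) < x*y := by positivity
  have hxy3 : (0:ℝ) < x*y^3 := by positivity
  have hs : (0:ℝ) < Real.sqrt (x*y) := Real.sqrt_pos.mpr hxy
  have hs3 : (0:ℝ) < Real.sqrt (x*y^3) := Real.sqrt_pos.mpr hxy3
  -- ∂H/∂px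
  have eHpx : deriv (fun t => t*py + γ₁*x*y + γ₂ / Real.sqrt (x*y^3) + γ₃ / y^2) px = py := by
    have h : HasDerivAt (fun t : ℝ => t*py + γ₁*x*y + γ₂ / Real.sqrt (x*y^3) + γ₃ / y^2) py px := by
      have := ((((hasDerivAt_id px).mul_const py).add_const (γ₁*x*y)).add_const
        (γ₂ / Real.sqrt (x*y^3))).add_const (γ₃ / y^2)
      simpa using this
    exact h.deriv
  -- ∂H/∂py
  have eHpy : deriv (fun t => px*t + γ₁*x*y + γ₂ / Real.sqrt (x*y^3) + γ₃ / y^2) py = px := by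
    have h : HasDerivAt (fun t : ℝ => px*t + γ₁*x*y + γ₂ / Real.sqrt (x*y^3) + γ₃ / y^2) px py := by
      have := ((((hasDerivAt_id py).const_mul px).add_const (γ₁*x*y)).add_const
        (γ₂ / Real.sqrt (x*y^3))).add_const (γ₃ / y^2)
      simpa using this
    exact h.deriv
  -- ∂H/∂x
  have eHx : deriv (fun t => px*py + γ₁*t*y + γ₂ / Real.sqrt (t*y^3) + γ₃ / y^2) x
      = γ₁*y - γ₂*(y^3/(2*Real.sqrt (x*y^3)))/(Real.sqrt (x*y^3))^2 := by
    have hsq : HasDerivAt (fun t : ℝ => Real.sqrt (t*y^3)) (y^3/(2*Real.sqrt (x*y^3))) x := by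
      have := ((hasDerivAt_id x).mul_const (y^3)).sqrt (by positivity : x*y^3 ≠ 0)
      simpa using this
    have hdiv : HasDerivAt (fun t : ℝ => γ₂ / Real.sqrt (t*y^3))
        (-(γ₂*(y^3/(2*Real.sqrt (x*y^3))))/(Real.sqrt (x*y^3))^2) x := by
      have := (hasDerivAt_const x γ₂).fun_div hsq hs3.ne'
      simpa using this
    have hgy : HasDerivAt (fun t : ℝ => γ₁*t*y) (γ₁*y) x := by
      simpa using ((hasDerivAt_id x).const_mul γ₁).mul_const y
    have h : HasDerivAt (fun t : ℝ => px*py + γ₁*t*y + γ₂ / Real.sqrt (t*y^3) + γ₃ / y^2)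
        (γ₁*y - γ₂*(y^3/(2*Real.sqrt (x*y^3)))/(Real.sqrt (x*y^3))^2) x := by
      have := (((hasDerivAt_const x (px*py)).fun_add hgy).fun_add hdiv).add_const (γ₃ / y^2)
      exact this.congr_deriv (by ring)
    exact h.deriv
  -- ∂H/∂y
  have eHy : deriv (fun t => px*py + γ₁*x*t + γ₂ / Real.sqrt (x*t^3) + γ₃ / t^2) y
      = γ₁*x - γ₂*(x*(3*y^2)/(2*Real.sqrt (x*y^3)))/(Real.sqrt (x*y^3))^2
        - γ₃*(2*y)/(y^2)^2 := by
    have hin : HasDerivAt (fun t : ℝ => x*t^3) (x*(3*y^2)) y := by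
      have := (hasDerivAt_pow 3 y).const_mul x
      simpa using this
    have hsq : HasDerivAt (fun t : ℝ => Real.sqrt (x*t^3)) (x*(3*y^2)/(2*Real.sqrt (x*y^3))) y :=
      hin.sqrt (by positivity : x*y^3 ≠ 0)
    have hdiv : HasDerivAt (fun t : ℝ => γ₂ / Real.sqrt (x*t^3))
        (-(γ₂*(x*(3*y^2)/(2*Real.sqrt (x*y^3))))/(Real.sqrt (x*y^3))^2) y := by
      have := (hasDerivAt_const y γ₂).fun_div hsq hs3.ne'
      simpa using this
    have hinv : HasDerivAt (fun t : ℝ => γ₃ / t^2) (-(γ₃*(2*y))/(y^2)^2) y := by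
      have := (hasDerivAt_const y γ₃).fun_div (hasDerivAt_pow 2 y) (by positivity : y^2 ≠ 0)
      simpa using this
    have hgx : HasDerivAt (fun t : ℝ => γ₁*x*t) (γ₁*x) y := by
      simpa using (hasDerivAt_id y).const_mul (γ₁*x)
    have h : HasDerivAt (fun t : ℝ => px*py + γ₁*x*t + γ₂ / Real.sqrt (x*t^3) + γ₃ / t^2)
        (γ₁*x - γ₂*(x*(3*y^2)/(2*Real.sqrt (x*y^3)))/(Real.sqrt (x*y^3))^2
          - γ₃*(2*y)/(y^2)^2) y := by
      have := (((hasDerivAt_const y (px*py)).fun_add hgx).fun_add hdiv).fun_add hinv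
      exact this.congr_deriv (by ring)
    exact h.deriv
  -- ∂K/∂px
  have eKpx : deriv (fun t => -4*(x*t - y*py)^2*(t^2 + γ₁*y^2) - 4*γ₂^2/(x*y)
        + 8*t*(x*t - y*py)*γ₂ / Real.sqrt (x*y) + 16*x*(t^2 + γ₁*y^2)*γ₃ / y) px
      = -4*(2*(x*px - y*py)*x)*(px^2 + γ₁*y^2) + (-4*(x*px - y*py)^2)*(2*px)
        + (8*(x*px - y*py) + 8*px*x)*γ₂ / Real.sqrt (x*y) + 16*x*(2*px)*γ₃ / y := by
    have hlin : HasDerivAt (fun t : ℝ => x*t - y*py) x px := by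
      simpa using ((hasDerivAt_id px).const_mul x).sub_const (y*py)
    have hq : HasDerivAt (fun t : ℝ => (x*t - y*py)^2) (2*(x*px - y*py)*x) px := by
      simpa using hlin.fun_pow 2
    have hp2 : HasDerivAt (fun t : ℝ => t^2 + γ₁*y^2) (2*px) px := by
      simpa using (hasDerivAt_pow 2 px).add_const (γ₁*y^2)
    have hA : HasDerivAt (fun t : ℝ => -4*(x*t - y*py)^2*(t^2 + γ₁*y^2))
        (-4*(2*(x*px - y*py)*x)*(px^2 + γ₁*y^2) + (-4*(x*px - y*py)^2)*(2*px)) px := by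
      have := (hq.const_mul (-4)).fun_mul hp2
      convert this using 1 <;> ring
    have hC : HasDerivAt (fun t : ℝ => 8*t*(x*t - y*py)*γ₂ / Real.sqrt (x*y))
        ((8*(x*px - y*py) + 8*px*x)*γ₂ / Real.sqrt (x*y)) px := by
      have h8 : HasDerivAt (fun t : ℝ => 8*t) (8:ℝ) px := by
        simpa using (hasDerivAt_id px).const_mul (8:ℝ)
      have := ((h8.fun_mul hlin).mul_const γ₂).div_const (Real.sqrt (x*y))
      convert this using 1 <;> ring
    have hD : HasDerivAt (fun t : ℝ => 16*x*(t^2 + γ₁*y^2)*γ₃ / y) (16*x*(2*px)*γ₃ / y) px := by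
      have := ((hp2.const_mul (16*x)).mul_const γ₃).div_const y
      convert this using 1 <;> ring
    have h := ((hA.sub_const (4*γ₂^2/(x*y))).fun_add hC).fun_add hD
    exact h.deriv
  -- ∂K/∂py
  have eKpy : deriv (fun t => -4*(x*px - y*t)^2*(px^2 + γ₁*y^2) - 4*γ₂^2/(x*y)
        + 8*px*(x*px - y*t)*γ₂ / Real.sqrt (x*y) + 16*x*(px^2 + γ₁*y^2)*γ₃ / y) py
      = -4*(2*(x*px - y*py)*(-y))*(px^2 + γ₁*y^2)
        + 8*px*(-y)*γ₂ / Real.sqrt (x*y) := by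
    have hlin : HasDerivAt (fun t : ℝ => x*px - y*t) (-y) py := by
      simpa using (hasDerivAt_const py (x*px)).fun_sub ((hasDerivAt_id py).const_mul y)
    have hq : HasDerivAt (fun t : ℝ => (x*px - y*t)^2) (2*(x*px - y*py)*(-y)) py := by
      simpa using hlin.fun_pow 2
    have hA : HasDerivAt (fun t : ℝ => -4*(x*px - y*t)^2*(px^2 + γ₁*y^2))
        (-4*(2*(x*px - y*py)*(-y))*(px^2 + γ₁*y^2)) py := by
      have := (hq.const_mul (-4)).mul_const (px^2 + γ₁*y^2)
      convert this using 1 <;> ring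
    have hC : HasDerivAt (fun t : ℝ => 8*px*(x*px - y*t)*γ₂ / Real.sqrt (x*y))
        (8*px*(-y)*γ₂ / Real.sqrt (x*y)) py := by
      have := ((hlin.const_mul (8*px)).mul_const γ₂).div_const (Real.sqrt (x*y))
      convert this using 1 <;> ring
    have h := (((hA.sub_const (4*γ₂^2/(x*y))).fun_add hC).add_const (16*x*(px^2 + γ₁*y^2)*γ₃ / y))
    have := h.deriv
    convert this using 2 <;> ring
  -- ∂K/∂x
  have eKx : deriv (fun t => -4*(t*px - y*py)^2*(px^2 + γ₁*y^2) - 4*γ₂^2/(t*y)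
        + 8*px*(t*px - y*py)*γ₂ / Real.sqrt (t*y) + 16*t*(px^2 + γ₁*y^2)*γ₃ / y) x
      = -4*(2*(x*px - y*py)*px)*(px^2 + γ₁*y^2) + (4*γ₂^2*y)/(x*y)^2
        + (8*px*px*γ₂*Real.sqrt (x*y)
            - 8*px*(x*px - y*py)*γ₂*(y/(2*Real.sqrt (x*y))))/(Real.sqrt (x*y))^2
        + 16*(px^2 + γ₁*y^2)*γ₃ / y := by
    have hlin : HasDerivAt (fun t : ℝ => t*px - y*py) px x := by
      simpa using ((hasDerivAt_id x).mul_const px).sub_const (y*py)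
    have hq : HasDerivAt (fun t : ℝ => (t*px - y*py)^2) (2*(x*px - y*py)*px) x := by
      simpa using hlin.fun_pow 2
    have hA : HasDerivAt (fun t : ℝ => -4*(t*px - y*py)^2*(px^2 + γ₁*y^2))
        (-4*(2*(x*px - y*py)*px)*(px^2 + γ₁*y^2)) x := by
      have := (hq.const_mul (-4)).mul_const (px^2 + γ₁*y^2)
      convert this using 1 <;> ring
    have hB : HasDerivAt (fun t : ℝ => 4*γ₂^2/(t*y)) (-(4*γ₂^2*y)/(x*y)^2) x := by
      have := (hasDerivAt_const x (4*γ₂^2)).fun_div ((hasDerivAt_id x).mul_const y) hxy.ne'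
      exact this.congr_deriv (by simp <;> ring)
    have hsq : HasDerivAt (fun t : ℝ => Real.sqrt (t*y)) (y/(2*Real.sqrt (x*y))) x := by
      have := ((hasDerivAt_id x).mul_const y).sqrt hxy.ne'
      simpa using this
    have hC : HasDerivAt (fun t : ℝ => 8*px*(t*px - y*py)*γ₂ / Real.sqrt (t*y))
        ((8*px*px*γ₂*Real.sqrt (x*y)
          - 8*px*(x*px - y*py)*γ₂*(y/(2*Real.sqrt (x*y))))/(Real.sqrt (x*y))^2) x := by
      have := ((hlin.const_mul (8*px)).mul_const γ₂).fun_div hsq hs.ne'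
      convert this using 1 <;> ring
    have hD : HasDerivAt (fun t : ℝ => 16*t*(px^2 + γ₁*y^2)*γ₃ / y)
        (16*(px^2 + γ₁*y^2)*γ₃ / y) x := by
      have := ((((hasDerivAt_id x).const_mul 16).mul_const (px^2 + γ₁*y^2)).mul_const γ₃).div_const y
      exact this.congr_deriv (by simp)
    have h := ((hA.fun_sub hB).fun_add hC).fun_add hD
    have := h.deriv
    convert this using 2 <;> ring
  -- ∂K/∂y
  have eKy : deriv (fun t => -4*(x*px - t*py)^2*(px^2 + γ₁*t^2) - 4*γ₂^2/(x*t)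
        + 8*px*(x*px - t*py)*γ₂ / Real.sqrt (x*t) + 16*x*(px^2 + γ₁*t^2)*γ₃ / t) y
      = -4*(2*(x*px - y*py)*(-py))*(px^2 + γ₁*y^2) + (-4*(x*px - y*py)^2)*(γ₁*(2*y))
        + (4*γ₂^2*x)/(x*y)^2
        + (8*px*(-py)*γ₂*Real.sqrt (x*y)
            - 8*px*(x*px - y*py)*γ₂*(x/(2*Real.sqrt (x*y))))/(Real.sqrt (x*y))^2
        + (16*x*(γ₁*(2*y))*γ₃*y - 16*x*(px^2 + γ₁*y^2)*γ₃)/y^2 := by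
    have hlin : HasDerivAt (fun t : ℝ => x*px - t*py) (-py) y := by
      simpa using (hasDerivAt_const y (x*px)).fun_sub ((hasDerivAt_id y).mul_const py)
    have hq : HasDerivAt (fun t : ℝ => (x*px - t*py)^2) (2*(x*px - y*py)*(-py)) y := by
      simpa using hlin.fun_pow 2
    have hquad : HasDerivAt (fun t : ℝ => px^2 + γ₁*t^2) (γ₁*(2*y)) y := by
      have := (hasDerivAt_const y (px^2)).fun_add ((hasDerivAt_pow 2 y).const_mul γ₁)
      simpa using this
    have hA : HasDerivAt (fun t : ℝ => -4*(x*px - t*py)^2*(px^2 + γ₁*t^2))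
        (-4*(2*(x*px - y*py)*(-py))*(px^2 + γ₁*y^2) + (-4*(x*px - y*py)^2)*(γ₁*(2*y))) y := by
      have := (hq.const_mul (-4)).fun_mul hquad
      convert this using 1 <;> ring
    have hB : HasDerivAt (fun t : ℝ => 4*γ₂^2/(x*t)) (-(4*γ₂^2*x)/(x*y)^2) y := by
      have := (hasDerivAt_const y (4*γ₂^2)).fun_div ((hasDerivAt_id y).const_mul x) hxy.ne'
      exact this.congr_deriv (by simp <;> ring)
    have hsq : HasDerivAt (fun t : ℝ => Real.sqrt (x*t)) (x/(2*Real.sqrt (x*y))) y := by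
      have := ((hasDerivAt_id y).const_mul x).sqrt hxy.ne'
      simpa using this
    have hC : HasDerivAt (fun t : ℝ => 8*px*(x*px - t*py)*γ₂ / Real.sqrt (x*t))
        ((8*px*(-py)*γ₂*Real.sqrt (x*y)
          - 8*px*(x*px - y*py)*γ₂*(x/(2*Real.sqrt (x*y))))/(Real.sqrt (x*y))^2) y := by
      have := ((hlin.const_mul (8*px)).mul_const γ₂).fun_div hsq hs.ne'
      convert this using 1 <;> ring
    have hD : HasDerivAt (fun t : ℝ => 16*x*(px^2 + γ₁*t^2)*γ₃ / t)
        ((16*x*(γ₁*(2*y))*γ₃*y - 16*x*(px^2 + γ₁*y^2)*γ₃)/y^2) y := by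
      have := ((hquad.const_mul (16*x)).mul_const γ₃).fun_div (hasDerivAt_id y) hy.ne'
      exact this.congr_deriv (by simp <;> ring)
    have h := ((hA.fun_sub hB).fun_add hC).fun_add hD
    have := h.deriv
    convert this using 2 <;> ring
  simp only [pb, H₁new, K₄new]
  rw [eHpx, eHpy, eHx, eHy, eKpx, eKpy, eKx, eKy]
  -- algebra
  set u := Real.sqrt x with hu
  set v := Real.sqrt y with hv
  have hu0 : 0 < u := Real.sqrt_pos.mpr hx
  have hv0 : 0 < v := Real.sqrt_pos.mpr hy
  have hx2 : u^2 = x := Real.sq_sqrt hx.le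
  have hy2 : v^2 = y := Real.sq_sqrt hy.le
  have e1 : Real.sqrt (x*y) = u*v := by
    rw [← hx2, ← hy2, show u^2*v^2 = (u*v)^2 by ring, Real.sqrt_sq (by positivity)]
  have e3 : Real.sqrt (x*y^3) = u*v^3 := by
    rw [← hx2, ← hy2, show u^2*(v^2)^3 = (u*v^3)^2 by ring, Real.sqrt_sq (by positivity)]
  rw [e1, e3, ← hx2, ← hy2]
  field_simp
  ring
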